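/- Let u be a point, and let v₀, v₁, ..., v_k be points in a cone C̄₀ᵘ of angle π/3 at u, appearing in counterclockwise angular order around u, such that for each i the segment u·vᵢ makes angle at most π/3 with each cone boundary. Let c be the intersection of the left cone boundary ray with the horizontal line through v_k. Suppose each consecutive pair vᵢ₋₁, vᵢ is connected by a segment whose direction lies within the cone directions (each segment vᵢ₋₁vᵢ lies in a cone of angle π/3 translated to vᵢ₋₁ or vᵢ). Then the total length |uv₀| + Σᵢ |vᵢ₋₁vᵢ| is at most |uc| + 2·|c v_k|. -/

import Mathlib

open Real

private lemma seg_bound (z : ℂ) (h : z.arg ∈ Set.Icc (π / 3) (2 * π / 3)) :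
    ‖z‖ ≤ (4 * Real.sqrt 3 / 3) * z.im + 2 * z.re := by
  obtain ⟨h1, h2⟩ := h
  have hpi := Real.pi_pos
  have hz : z ≠ 0 := by
    intro hz0
    rw [hz0, Complex.arg_zero] at h1
    linarith
  have habs : (0 : ℝ) < ‖z‖ := norm_pos_iff.mpr hz
  have hre : z.re = ‖z‖ * Real.cos z.arg := by
    rw [Complex.cos_arg hz]; field_simp
  have him : z.im = ‖z‖ * Real.sin z.arg := by
    rw [Complex.sin_arg]; field_simp
  have hcos : Real.cos z.arg ≥ -(1/2) := by
    have : Real.cos (2 * π / 3) ≤ Real.cos z.arg := by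
      apply Real.cos_le_cos_of_nonneg_of_le_pi
      · linarith
      · linarith
      · exact h2
    have h23 : (2 * π / 3 : ℝ) = π - π / 3 := by ring
    rw [h23, Real.cos_pi_sub, Real.cos_pi_div_three] at this
    linarith
  have hsin : Real.sin z.arg ≥ Real.sqrt 3 / 2 := by
    have e1 : Real.sin z.arg = Real.cos (π / 2 - z.arg) := (Real.cos_pi_div_two_sub _).symm
    have e2 : Real.cos (π / 2 - z.arg) = Real.cos |π / 2 - z.arg| := (Real.cos_abs _).symm
    have e3 : Real.cos |π / 2 - z.arg| ≥ Real.cos (π / 6) := by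
      apply Real.cos_le_cos_of_nonneg_of_le_pi
      · exact abs_nonneg _
      · linarith
      · rw [abs_le]; constructor <;> linarith
    rw [e1, e2, Real.cos_pi_div_six] at *
    linarith
  have hs3 : Real.sqrt 3 * Real.sqrt 3 = 3 := Real.mul_self_sqrt (by norm_num)
  have hs3p : (0:ℝ) < Real.sqrt 3 := Real.sqrt_pos.mpr (by norm_num)
  rw [hre, him]
  have key : 1 ≤ (4 * Real.sqrt 3 / 3) * Real.sin z.arg + 2 * Real.cos z.arg := by
    nlinarith [mul_le_mul_of_nonneg_left hsin (le_of_lt hs3p)]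
  nlinarith [mul_le_mul_of_nonneg_left key (le_of_lt habs)]

private lemma telescope (k : ℕ) (v : Fin (k + 1) → ℂ) :
    ∑ i : Fin k, (v i.succ - v i.castSucc) = v (Fin.last k) - v 0 := by
  set g : ℕ → ℂ := fun n => v ⟨min n k, by omega⟩ with hg
  have key : ∀ i : Fin k, v i.succ - v i.castSucc = g (↑i + 1) - g ↑i := by
    intro i
    have hi := i.isLt
    have h1 : g (↑i + 1) = v i.succ := by
      show v _ = v i.succ
      congr 1
      apply Fin.ext
      simp [Fin.val_succ]
    have h2 : g ↑i = v i.castSucc := by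
      show v _ = v i.castSucc
      congr 1
      apply Fin.ext
      simp only [Fin.coe_castSucc]
      omega
    rw [h1, h2]
  calc ∑ i : Fin k, (v i.succ - v i.castSucc)
      = ∑ i : Fin k, (g (↑i + 1) - g ↑i) := Finset.sum_congr rfl fun i _ => key i
    _ = ∑ i ∈ Finset.range k, (g (i + 1) - g i) := Fin.sum_univ_eq_sum_range (fun i => g (i + 1) - g i) k
    _ = g k - g 0 := Finset.sum_range_sub g k
    _ = v (Fin.last k) - v 0 := by
        have hk : g k = v (Fin.last k) := by
          show v _ = _
          congr 1
          apply Fin.ext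
          simp [Fin.last]
        have h0 : g 0 = v 0 := by
          show v _ = _
          congr 1
        rw [hk, h0]

theorem stmt10 (u c : ℂ) (k : ℕ) (v : Fin (k + 1) → ℂ)
    (hv0 : (v 0 - u).arg ∈ Set.Icc (π / 3) (2 * π / 3))
    (hseg : ∀ i : Fin k, (v i.succ - v i.castSucc).arg ∈ Set.Icc (π / 3) (2 * π / 3))
    (hc : ∃ t : ℝ, 0 ≤ t ∧ c = u + (t : ℂ) * Complex.exp ((2 * π / 3 : ℂ) * Complex.I))
    (hcim : c.im = (v (Fin.last k)).im) :
    ‖v 0 - u‖ + ∑ i : Fin k, ‖v i.succ - v i.castSucc‖ ≤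
      ‖c - u‖ + 2 * ‖v (Fin.last k) - c‖ := by
  obtain ⟨t, ht, hct⟩ := hc
  have hs3 : Real.sqrt 3 * Real.sqrt 3 = 3 := Real.mul_self_sqrt (by norm_num)
  have hs3p : (0:ℝ) < Real.sqrt 3 := Real.sqrt_pos.mpr (by norm_num)
  -- value of the exponential
  have hexp : Complex.exp ((2 * π / 3 : ℂ) * Complex.I)
      = Complex.mk (-(1/2)) (Real.sqrt 3 / 2) := by
    have : ((2 * π / 3 : ℂ)) = ((2 * π / 3 : ℝ) : ℂ) := by push_cast; ring
    rw [this, Complex.exp_mul_I, ← Complex.ofReal_cos, ← Complex.ofReal_sin]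
    have hc23 : Real.cos (2 * π / 3) = -(1/2) := by
      have h23 : (2 * π / 3 : ℝ) = π - π / 3 := by ring
      rw [h23, Real.cos_pi_sub, Real.cos_pi_div_three]
    have hsn : Real.sin (2 * π / 3) = Real.sqrt 3 / 2 := by
      have h23 : (2 * π / 3 : ℝ) = π - π / 3 := by ring
      rw [h23, Real.sin_pi_sub, Real.sin_pi_div_three]
    rw [hc23, hsn]
    apply Complex.ext <;> simp
  have hcre : (c - u).re = -(t / 2) := by
    rw [hct, hexp]; simp [Complex.ext_iff]; ring
  have hcim' : (c - u).im = t * Real.sqrt 3 / 2 := by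
    rw [hct, hexp]; simp [Complex.ext_iff]; ring
  have habsc : ‖c - u‖ = t := by
    rw [hct]
    have : u + (t:ℂ) * Complex.exp ((2 * π / 3 : ℂ) * Complex.I) - u
        = (t:ℂ) * Complex.exp ((2 * π / 3 : ℂ) * Complex.I) := by ring
    rw [this, norm_mul, Complex.norm_exp]
    simp [Complex.norm_of_nonneg ht, ht]
  -- per-segment bounds, summed
  set L : ℂ → ℝ := fun z => (4 * Real.sqrt 3 / 3) * z.im + 2 * z.re with hL
  have hsum : ‖v 0 - u‖ + ∑ i : Fin k, ‖v i.succ - v i.castSucc‖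
      ≤ L (v 0 - u) + ∑ i : Fin k, L (v i.succ - v i.castSucc) := by
    apply add_le_add (seg_bound _ hv0)
    exact Finset.sum_le_sum fun i _ => seg_bound _ (hseg i)
  have hlin : L (v 0 - u) + ∑ i : Fin k, L (v i.succ - v i.castSucc)
      = L (v (Fin.last k) - u) := by
    have him : (∑ i : Fin k, (v i.succ - v i.castSucc)).im
        = ∑ i : Fin k, (v i.succ - v i.castSucc).im :=
      map_sum Complex.imAddGroupHom _ _
    have hre : (∑ i : Fin k, (v i.succ - v i.castSucc)).re
        = ∑ i : Fin k, (v i.succ - v i.castSucc).re :=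
      map_sum Complex.reAddGroupHom _ _
    have htel := telescope k v
    simp only [hL]
    rw [Finset.sum_add_distrib, ← Finset.mul_sum, ← Finset.mul_sum, ← him, ← hre, htel]
    simp only [Complex.sub_re, Complex.sub_im]
    ring
  -- compare with RHS
  set s : ℝ := (v (Fin.last k)).re - c.re with hsdef
  have habsv : ‖v (Fin.last k) - c‖ = |s| := by
    have him0 : (v (Fin.last k) - c).im = 0 := by simp [Complex.sub_im, hcim]
    have hre1 : (v (Fin.last k) - c).re = s := by simp [Complex.sub_re, hsdef]
    rw [Complex.norm_def, Complex.normSq_apply, him0, hre1]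
    rw [mul_zero, add_zero]
    exact Real.sqrt_mul_self_eq_abs s
  have hvre : (v (Fin.last k) - u).re = -(t/2) + s := by
    have : (v (Fin.last k) - u).re = (c - u).re + s := by
      simp only [Complex.sub_re, hsdef]; ring
    rw [this, hcre]
  have hvim : (v (Fin.last k) - u).im = t * Real.sqrt 3 / 2 := by
    have : (v (Fin.last k) - u).im = (c - u).im := by
      simp [Complex.sub_im, hcim]
    rw [this, hcim']
  have hfinal : L (v (Fin.last k) - u) = t + 2 * s := by
    rw [hL]
    simp only [hvre, hvim]
    linear_combination (2 * t / 3) * hs3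
  calc ‖v 0 - u‖ + ∑ i : Fin k, ‖v i.succ - v i.castSucc‖
      ≤ L (v 0 - u) + ∑ i : Fin k, L (v i.succ - v i.castSucc) := hsum
    _ = t + 2 * s := by rw [hlin, hfinal]
    _ ≤ t + 2 * |s| := by have := le_abs_self s; linarith
    _ = ‖c - u‖ + 2 * ‖v (Fin.last k) - c‖ := by
        rw [habsc, habsv]
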